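/- Let K be a field of characteristic zero and let D = ∂_{x_1} + (a_2·x_2 + b_2)·∂_{x_2} + b_3·∂_{x_3} be the K-derivation of K[x_1,x_2,x_3] with a_2, b_2 ∈ K[x_1] and b_3 ∈ K[x_1,x_2]. Write b_3 = b_3^{(v)}·x_2^v + ⋯ + b_3^{(1)}·x_2 + b_3^{(0)} with each b_3^{(j)} ∈ K[x_1] and b_3^{(v)} ≠ 0 (so v = deg_{x_2} b_3). If deg a_2 > deg b_3^{(v)} (degrees in x_1), then Im D = D(K[x_1,x_2,x_3]) is not a Mathieu–Zhao space of K[x_1,x_2,x_3]. -/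

import Mathlib

set_option linter.unusedSectionVars false
set_option maxHeartbeats 1000000

namespace S11
open Polynomial

noncomputable section

variable {A : Type*} [CommSemiring A]

/-- Apply an additive map to each coefficient of a polynomial. -/
def liftD (d : A →+ A) (g : A[X]) : A[X] :=
  ⟨AddMonoidAlgebra.ofCoeff (Finsupp.mapRange d (map_zero d) g.toFinsupp.coeff)⟩

lemma coeff_liftD (d : A →+ A) (g : A[X]) (n : ℕ) :
    (liftD d g).coeff n = d (g.coeff n) := by
  rcases g with ⟨g⟩; simp [liftD, Polynomial.coeff]

lemma liftD_add (d : A →+ A) (g h : A[X]) :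
    liftD d (g + h) = liftD d g + liftD d h := by
  ext n; simp [coeff_liftD]

lemma liftD_C (d : A →+ A) (a : A) : liftD d (C a) = C (d a) := by
  ext n
  simp only [coeff_liftD, coeff_C]
  split <;> simp

lemma liftD_X (d : A →+ A) (h1 : d 1 = 0) : liftD d (X : A[X]) = 0 := by
  ext n
  rw [coeff_liftD]
  by_cases h : n = 1 <;> simp [Polynomial.coeff_X, h, h1]
  rw [if_neg (fun hc => h hc.symm)]
  simp

lemma liftD_mul (d : A →+ A) (hL : ∀ a b, d (a * b) = d a * b + a * d b) (g h : A[X]) :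
    liftD d (g * h) = liftD d g * h + g * liftD d h := by
  ext n
  simp only [coeff_liftD, coeff_add, coeff_mul, map_sum, hL, Finset.sum_add_distrib]

variable {K : Type*} [Field K] [CharZero K]

/-- coefficientwise x₁-derivative on `K[x₁][x₂]`. -/
def dmap : K[X][X] → K[X][X] := liftD (derivative (R := K)).toAddMonoidHom

lemma coeff_dmap (g : K[X][X]) (n : ℕ) : (dmap g).coeff n = derivative (g.coeff n) :=
  coeff_liftD _ g n

lemma dmap_mul (g h : K[X][X]) : dmap (g * h) = dmap g * h + g * dmap h :=
  liftD_mul _ (fun a b => derivative_mul) g h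

lemma dmap_C (u : K[X]) : dmap (C u) = C (derivative u) := liftD_C _ u

/-- The derivation `∂_{x₁} + (α x₂ + β₂) ∂_{x₂}` on `K[x₁][x₂]`. -/
def Dp (α β2 : K[X]) (q : K[X][X]) : K[X][X] :=
  dmap q + (C α * X + C β2) * derivative q

lemma coeff_Dp (α β2 : K[X]) (q : K[X][X]) (m : ℕ) :
    (Dp α β2 q).coeff (m + 1) =
      derivative (q.coeff (m + 1)) + α * (q.coeff (m + 1) * (m + 1 : ℕ))
        + β2 * (q.coeff (m + 2) * (m + 2 : ℕ)) := by
  simp only [Dp, coeff_add, coeff_dmap, add_mul, coeff_C_mul, mul_assoc,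
    coeff_X_mul, coeff_derivative]
  norm_num
  ring

lemma Dp_C (α β2 : K[X]) (u : K[X]) : Dp α β2 (C u) = C (derivative u) := by
  simp only [Dp, derivative_C, mul_zero, add_zero]
  exact dmap_C u

lemma lc_key {α : K[X]} (hα : α ≠ 0) (hd : 1 ≤ α.natDegree) {u : K[X]} (hu : u ≠ 0)
    {s : ℕ} (hs : 1 ≤ s) :
    (derivative u + α * (u * (s : K[X]))).natDegree = u.natDegree + α.natDegree ∧
      derivative u + α * (u * (s : K[X])) ≠ 0 := by
  have hsK : ((s : K[X])) ≠ 0 := Nat.cast_ne_zero.mpr (by omega)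
  have hus : u * (s : K[X]) ≠ 0 := mul_ne_zero hu hsK
  have h2 : (α * (u * (s : K[X]))).natDegree = u.natDegree + α.natDegree := by
    rw [natDegree_mul hα hus, natDegree_mul hu hsK, natDegree_natCast]
    ring
  have h1 : (derivative u).natDegree < (α * (u * (s : K[X]))).natDegree := by
    rw [h2]
    have := natDegree_derivative_le u
    omega
  constructor
  · rw [natDegree_add_eq_right_of_natDegree_lt h1, h2]
  · intro h0
    have : derivative u = -(α * (u * (s : K[X]))) := by linear_combination h0
    rw [this, natDegree_neg] at h1
    exact lt_irrefl _ h1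

lemma Dp_spec {α β2 : K[X]} (hα : α ≠ 0) (hd : 1 ≤ α.natDegree) {q : K[X][X]}
    (hq : 1 ≤ q.natDegree) :
    (Dp α β2 q).natDegree = q.natDegree ∧
      α.natDegree ≤ ((Dp α β2 q).coeff q.natDegree).natDegree := by
  set s := q.natDegree with hsdef
  have hqne : q ≠ 0 := fun h => by
    rw [hsdef, h, natDegree_zero] at hq; omega
  have hu : q.coeff s ≠ 0 := by
    simpa [hsdef] using leadingCoeff_ne_zero.mpr hqne
  obtain ⟨m, hm⟩ : ∃ m, s = m + 1 := ⟨s - 1, by omega⟩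
  have htop : (Dp α β2 q).coeff s = derivative (q.coeff s) + α * (q.coeff s * (s : K[X])) := by
    rw [hm, coeff_Dp]
    have : q.coeff (m + 2) = 0 := coeff_eq_zero_of_natDegree_lt (by omega)
    simp [this]
  obtain ⟨hlcdeg, hlcne⟩ := lc_key hα hd hu hq
  have hcoeffne : (Dp α β2 q).coeff s ≠ 0 := by rw [htop]; exact hlcne
  have hhigh : ∀ N, s < N → (Dp α β2 q).coeff N = 0 := by
    intro N hN
    obtain ⟨m', hm'⟩ : ∃ m', N = m' + 1 := ⟨N - 1, by omega⟩
    rw [hm', coeff_Dp]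
    have h1 : q.coeff (m' + 1) = 0 := coeff_eq_zero_of_natDegree_lt (by omega)
    have h2 : q.coeff (m' + 2) = 0 := coeff_eq_zero_of_natDegree_lt (by omega)
    simp [h1, h2]
  have hdeg : (Dp α β2 q).natDegree = s :=
    le_antisymm (natDegree_le_iff_coeff_eq_zero.mpr hhigh) (le_natDegree_of_ne_zero hcoeffne)
  refine ⟨hdeg, ?_⟩
  rw [htop, hlcdeg]
  omega

/-- Lemma A: if `Dp q` has x₂-degree 0, then so does `q`. -/
lemma Dp_A {α β2 : K[X]} (hα : α ≠ 0) (hd : 1 ≤ α.natDegree) {q : K[X][X]}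
    (h : (Dp α β2 q).natDegree = 0) : q.natDegree = 0 := by
  by_contra hq
  obtain ⟨h1, _⟩ := Dp_spec (β2 := β2) hα hd (q := q) (by omega)
  omega

/-- Lemma B: elements in the image of `Dp` with positive x₂-degree have
x₂-leading coefficient of x₁-degree at least `deg α`. -/
lemma Dp_B {α β2 : K[X]} (hα : α ≠ 0) (hd : 1 ≤ α.natDegree) {q g : K[X][X]}
    (h : Dp α β2 q = g) (hg : 1 ≤ g.natDegree) :
    α.natDegree ≤ (g.coeff g.natDegree).natDegree := by
  have hq : 1 ≤ q.natDegree := by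
    by_contra hq
    have h0 : q.natDegree = 0 := by omega
    obtain ⟨u, rfl⟩ := natDegree_eq_zero.mp h0
    rw [Dp_C] at h
    rw [← h] at hg
    simp [natDegree_C] at hg
  obtain ⟨h1, h2⟩ := Dp_spec (β2 := β2) hα hd hq
  rw [h] at h1 h2
  rw [h1]
  exact h2

/-- If `Dp q = 0` then `q` is a constant. -/
lemma Dp_zero {α β2 : K[X]} (hα : α ≠ 0) (hd : 1 ≤ α.natDegree) {q : K[X][X]}
    (h : Dp α β2 q = 0) : ∃ c : K, q = C (C c) := by
  have h0 : q.natDegree = 0 := Dp_A hα hd (by rw [h]; simp)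
  obtain ⟨u, rfl⟩ := natDegree_eq_zero.mp h0
  rw [Dp_C] at h
  have hder : derivative u = 0 := by
    have := congrArg (fun p => Polynomial.coeff p 0) h
    simpa using this
  have hu : u.natDegree = 0 := natDegree_eq_zero_of_derivative_eq_zero hder
  obtain ⟨c, rfl⟩ := natDegree_eq_zero.mp hu
  exact ⟨c, rfl⟩

/-- the final contradiction step -/
lemma final_step {α β2 : K[X]} (hα : α ≠ 0) (hd : 1 ≤ α.natDegree) {q W : K[X][X]} {v : ℕ}
    (hW : W.natDegree ≤ v) (h : Dp α β2 q + W = X ^ (v + 1)) : False := by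
  have hDp : Dp α β2 q = X ^ (v + 1) - W := by linear_combination h
  set g : K[X][X] := X ^ (v + 1) - W with hg
  have hcoeff : g.coeff (v + 1) = 1 := by
    rw [hg, coeff_sub, coeff_X_pow, if_pos rfl,
      coeff_eq_zero_of_natDegree_lt (by omega), sub_zero]
  have hhigh : ∀ N, v + 1 < N → g.coeff N = 0 := by
    intro N hN
    rw [hg, coeff_sub, coeff_X_pow, if_neg (by omega),
      coeff_eq_zero_of_natDegree_lt (by omega), sub_zero]
  have hdeg : g.natDegree = v + 1 :=
    le_antisymm (natDegree_le_iff_coeff_eq_zero.mpr hhigh)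
      (le_natDegree_of_ne_zero (by rw [hcoeff]; exact one_ne_zero))
  have := Dp_B hα hd hDp (by omega)
  rw [hdeg, hcoeff, natDegree_one] at this
  omega

/-- The core contradiction: the cascade of coefficient equations is unsolvable. -/
lemma main_core (α β2 : K[X]) (hα : α ≠ 0) (hd : 1 ≤ α.natDegree)
    (v : ℕ) (β : ℕ → K[X]) (hβv : β v ≠ 0) (hβdeg : (β v).natDegree < α.natDegree)
    (F : K[X][X][X])
    (hE : ∀ k : ℕ, Dp α β2 (F.coeff k)
        + (∑ j ∈ Finset.range (v + 1), C (β j) * X ^ j) *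
            (F.coeff (k + 1) * ((k : K[X][X]) + 1))
        = if k = 0 then X ^ (v + 1) else 0) : False := by
  set B3 : K[X][X] := ∑ j ∈ Finset.range (v + 1), C (β j) * X ^ j with hB3
  have hB3deg : B3.natDegree ≤ v := by
    refine natDegree_sum_le_of_forall_le _ _ (fun j hj => ?_)
    calc (C (β j) * X ^ j).natDegree ≤ (C (β j)).natDegree + (X ^ j : K[X][X]).natDegree :=
          natDegree_mul_le
      _ ≤ v := by
          rw [natDegree_C, natDegree_X_pow]
          have := Finset.mem_range.mp hj
          omega
  have hB3v : B3.coeff v = β v := by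
    rw [hB3, finset_sum_coeff]
    simp only [coeff_C_mul, coeff_X_pow, mul_ite, mul_one, mul_zero]
    rw [Finset.sum_ite_eq (Finset.range (v + 1)) v (fun j => β j)]
    simp
  have hB3ne : B3 ≠ 0 := fun h => hβv (by rw [← hB3v, h, coeff_zero])
  have hB3degeq : B3.natDegree = v :=
    le_antisymm hB3deg (le_natDegree_of_ne_zero (by rw [hB3v]; exact hβv))
  set M := F.natDegree + 1 with hM
  -- it suffices to bound the degree of W := B3 * (F.coeff 1 * (0+1))
  suffices hsuff : (B3 * (F.coeff 1 * ((0 : K[X][X]) + 1))).natDegree ≤ v by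
    have hE0 := hE 0
    rw [if_pos rfl] at hE0
    exact final_step hα hd hsuff (by exact_mod_cast hE0)
  by_cases hv : 1 ≤ v
  · -- case v ≥ 1
    have key2 : ∀ j k, 2 ≤ k → M ≤ k + j → F.coeff k = 0 := by
      intro j
      induction j with
      | zero =>
        intro k hk hMk
        exact coeff_eq_zero_of_natDegree_lt (by omega)
      | succ j ih =>
        intro k hk hMk
        by_cases h : M ≤ k + j
        · exact ih k hk h
        · have hknext : F.coeff (k + 1) = 0 := ih (k + 1) (by omega) (by omega)
          have hEk := hE k
          rw [if_neg (by omega), hknext] at hEk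
          simp only [zero_mul, mul_zero, add_zero] at hEk
          obtain ⟨c, hc⟩ := Dp_zero hα hd hEk
          by_cases hc0 : c = 0
          · rw [hc, hc0]; simp
          · exfalso
            obtain ⟨k', rfl⟩ : ∃ k', k = k' + 1 := ⟨k - 1, by omega⟩
            have hEk' := hE k'
            rw [if_neg (by omega), hc] at hEk'
            set γ : K := c * ((k' : K) + 1) with hγ
            have h1 : ((k' : K[X][X]) + 1) = C (C ((k' : K) + 1)) := by
              have h2 : ((k' : K) + 1) = ((k' + 1 : ℕ) : K) := by push_cast; ring
              rw [h2, map_natCast, map_natCast]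
              push_cast
              ring
            have hcast : (C (C c) : K[X][X]) * ((k' : K[X][X]) + 1) = C (C γ) := by
              rw [h1, ← map_mul, ← map_mul, hγ]
            rw [hcast] at hEk'
            have hDp : Dp α β2 (F.coeff k') = -(B3 * C (C γ)) := by linear_combination hEk'
            have hγne : (C γ : K[X]) ≠ 0 := by
              rw [ne_eq, Polynomial.C_eq_zero]
              exact mul_ne_zero hc0 (Nat.cast_add_one_ne_zero k')
            have hgdeg : (-(B3 * C (C γ))).natDegree = v := by
              rw [natDegree_neg, natDegree_mul_C (by simpa using hγne), hB3degeq]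
            have hle := Dp_B hα hd hDp (by omega)
            rw [hgdeg] at hle
            have hcoeffv : (-(B3 * C (C γ))).coeff v = -(β v * C γ) := by
              rw [coeff_neg, coeff_mul_C, hB3v]
            rw [hcoeffv, natDegree_neg, natDegree_mul hβv hγne, natDegree_C, add_zero] at hle
            omega
    have hF2 : F.coeff 2 = 0 := key2 M 2 le_rfl (by omega)
    have hE1 := hE 1
    rw [if_neg one_ne_zero, hF2] at hE1
    simp only [zero_mul, mul_zero, add_zero] at hE1
    obtain ⟨c1, hc1⟩ := Dp_zero hα hd hE1
    rw [hc1]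
    calc (B3 * ((C (C c1) : K[X][X]) * ((0 : K[X][X]) + 1))).natDegree
        ≤ B3.natDegree + ((C (C c1) : K[X][X]) * ((0 : K[X][X]) + 1)).natDegree :=
          natDegree_mul_le
      _ ≤ v := by
          rw [zero_add, mul_one, natDegree_C, hB3degeq]
          omega
  · -- case v = 0
    have hv0 : v = 0 := by omega
    have key : ∀ j k, 1 ≤ k → M ≤ k + j → (F.coeff k).natDegree = 0 := by
      intro j
      induction j with
      | zero =>
        intro k hk hMk
        rw [coeff_eq_zero_of_natDegree_lt (by omega), natDegree_zero]
      | succ j ih =>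
        intro k hk hMk
        by_cases h : M ≤ k + j
        · exact ih k hk h
        · have h1 : (F.coeff (k + 1)).natDegree = 0 := ih (k + 1) (by omega) (by omega)
          obtain ⟨u, hu⟩ := natDegree_eq_zero.mp h1
          have hEk := hE k
          rw [if_neg (by omega), ← hu] at hEk
          have hDp : Dp α β2 (F.coeff k) = -(B3 * (C u * ((k : K[X][X]) + 1))) := by
            linear_combination hEk
          refine Dp_A (β2 := β2) hα hd (q := F.coeff k) ?_
          rw [hDp, natDegree_neg]
          have hle : (B3 * (C u * ((k : K[X][X]) + 1))).natDegree ≤ 0 := by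
            calc (B3 * (C u * ((k : K[X][X]) + 1))).natDegree
                ≤ B3.natDegree + (C u * ((k : K[X][X]) + 1)).natDegree := natDegree_mul_le
              _ ≤ B3.natDegree + ((C u : K[X][X]).natDegree
                    + ((k : K[X][X]) + 1).natDegree) := by
                  have := natDegree_mul_le (p := (C u : K[X][X])) (q := ((k : K[X][X]) + 1))
                  omega
              _ ≤ 0 := by
                  have hcast : ((k : K[X][X]) + 1) = ((k + 1 : ℕ) : K[X][X]) := by push_cast; ring
                  rw [natDegree_C, hcast, natDegree_natCast, hB3degeq, hv0]
          omega
    have h1 : (F.coeff 1).natDegree = 0 := key M 1 le_rfl (by omega)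
    obtain ⟨u1, hu1⟩ := natDegree_eq_zero.mp h1
    rw [← hu1]
    calc (B3 * ((C u1 : K[X][X]) * ((0 : K[X][X]) + 1))).natDegree
        ≤ B3.natDegree + ((C u1 : K[X][X]) * ((0 : K[X][X]) + 1)).natDegree := natDegree_mul_le
      _ ≤ v := by rw [zero_add, mul_one, natDegree_C, hB3degeq]; omega


variable {K : Type*} [Field K] [CharZero K]

def Ψ : MvPolynomial (Fin 3) K →ₐ[K] K[X][X][X] :=
  MvPolynomial.aeval ![Polynomial.C (Polynomial.C (Polynomial.X : K[X])),
    Polynomial.C (Polynomial.X : K[X][X]), (Polynomial.X : K[X][X][X])]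

@[simp] lemma psi_X0 : Ψ (K := K) (MvPolynomial.X 0) = C (C X) := by
  simp [Ψ]
@[simp] lemma psi_X1 : Ψ (K := K) (MvPolynomial.X 1) = C X := by
  simp [Ψ]
@[simp] lemma psi_X2 : Ψ (K := K) (MvPolynomial.X 2) = X := by
  simp [Ψ]

def ι : K[X] →ₐ[K] MvPolynomial (Fin 3) K := Polynomial.aeval (MvPolynomial.X 0)

lemma iota_eq_sum (q : K[X]) :
    ι q = ∑ n ∈ q.support, MvPolynomial.C (q.coeff n) * MvPolynomial.X (0 : Fin 3) ^ n := by
  rw [ι, Polynomial.aeval_def, Polynomial.eval₂_eq_sum, Polynomial.sum_def]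
  simp [MvPolynomial.algebraMap_eq]

lemma coeff_iota (q : K[X]) (m : Fin 3 →₀ ℕ) :
    MvPolynomial.coeff m (ι q) =
      ∑ n ∈ q.support, q.coeff n * (if Finsupp.single (0 : Fin 3) n = m then 1 else 0) := by
  rw [iota_eq_sum, MvPolynomial.coeff_sum]
  simp [MvPolynomial.coeff_C_mul, MvPolynomial.coeff_X_pow]

lemma coeff_iota_single (q : K[X]) (N : ℕ) :
    MvPolynomial.coeff (Finsupp.single (0 : Fin 3) N) (ι q) = q.coeff N := by
  rw [coeff_iota]
  have key : ∀ n : ℕ,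
      q.coeff n * (if Finsupp.single (0 : Fin 3) n = Finsupp.single (0 : Fin 3) N then (1:K) else 0)
        = if n = N then q.coeff n else 0 := by
    intro n
    by_cases h : n = N
    · simp [h]
    · rw [if_neg h, if_neg, mul_zero]
      intro hc
      have := DFunLike.congr_fun hc (0 : Fin 3)
      simp [Finsupp.single_apply] at this
      exact h this
  simp_rw [key]
  rw [Finset.sum_ite_eq' q.support N (fun n => q.coeff n)]
  split
  · rfl
  · next h => exact (Polynomial.notMem_support_iff.mp h).symm

lemma iota_eq_zero {q : K[X]} (h : ι (K := K) q = 0) : q = 0 := by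
  ext n
  have := coeff_iota_single q n
  rw [h] at this
  simpa using this.symm

lemma support_iota (q : K[X]) {m : Fin 3 →₀ ℕ} (hm : m ∈ (ι (K := K) q).support) :
    m 0 ≤ q.natDegree := by
  have h := MvPolynomial.mem_support_iff.mp hm
  rw [coeff_iota] at h
  obtain ⟨n, hn, hne⟩ := Finset.exists_ne_zero_of_sum_ne_zero h
  have hsingle : Finsupp.single (0 : Fin 3) n = m := by
    by_contra hc
    simp [hc] at hne
  have : m 0 = n := by rw [← hsingle]; simp
  rw [this]
  exact Polynomial.le_natDegree_of_ne_zero (Polynomial.mem_support_iff.mp hn)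

lemma degreeOf_iota (q : K[X]) :
    MvPolynomial.degreeOf (0 : Fin 3) (ι (K := K) q) = q.natDegree := by
  refine le_antisymm (MvPolynomial.degreeOf_le_iff.mpr fun m hm => support_iota q hm) ?_
  by_cases hq : q = 0
  · simp [hq]
  · have hmem : Finsupp.single (0 : Fin 3) q.natDegree ∈ (ι (K := K) q).support := by
      rw [MvPolynomial.mem_support_iff, coeff_iota_single]
      exact fun hc => hq (Polynomial.leadingCoeff_eq_zero.mp hc)
    rw [MvPolynomial.degreeOf_eq_sup]
    have := Finset.le_sup (f := fun m : Fin 3 →₀ ℕ => m 0) hmem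
    simpa using this

lemma exists_rep {p : MvPolynomial (Fin 3) K}
    (hp : p ∈ MvPolynomial.supported K ({0} : Set (Fin 3))) : ∃ q : K[X], ι (K := K) q = p := by
  rw [MvPolynomial.supported_eq_adjoin_X] at hp
  induction hp using Algebra.adjoin_induction with
  | mem x hx =>
    obtain ⟨i, hi, rfl⟩ := hx
    rcases hi with rfl
    exact ⟨X, by simp [ι]⟩
  | algebraMap r => exact ⟨C r, by simp [ι]⟩
  | add x y hx hy ihx ihy =>
    obtain ⟨q1, rfl⟩ := ihx; obtain ⟨q2, rfl⟩ := ihy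
    exact ⟨q1 + q2, map_add _ _ _⟩
  | mul x y hx hy ihx ihy =>
    obtain ⟨q1, rfl⟩ := ihx; obtain ⟨q2, rfl⟩ := ihy
    exact ⟨q1 * q2, map_mul _ _ _⟩

lemma psi_iota (q : K[X]) : Ψ (K := K) (ι q) = C (C q) := by
  induction q using Polynomial.induction_on' with
  | add p q hp hq => rw [map_add, map_add, hp, hq, ← map_add, ← map_add]
  | monomial n a =>
    rw [ι, Polynomial.aeval_monomial, map_mul, map_pow, psi_X0]
    rw [← Polynomial.C_mul_X_pow_eq_monomial]
    simp only [map_mul, map_pow]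
    congr 1
    simp [Ψ, MvPolynomial.algebraMap_eq, Polynomial.algebraMap_apply]


@[simp] lemma psi_C (a : K) :
    Ψ (K := K) (MvPolynomial.C a) = algebraMap K (K[X][X][X]) a := by
  simp [Ψ]

lemma algebraMap_T (a : K) : algebraMap K (K[X][X][X]) a = C (C (C a)) := by
  rw [Polynomial.algebraMap_apply, Polynomial.algebraMap_apply, Polynomial.algebraMap_eq]

lemma psi_pderiv (i : Fin 3) (L : K[X][X][X] → K[X][X][X])
    (hadd : ∀ x y, L (x + y) = L x + L y)
    (hmul : ∀ x y, L (x * y) = L x * y + x * L y)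
    (hC : ∀ a : K, L (algebraMap K (K[X][X][X]) a) = 0)
    (hX : ∀ j : Fin 3, Ψ (MvPolynomial.pderiv i (MvPolynomial.X j)) = L (Ψ (MvPolynomial.X j)))
    (f : MvPolynomial (Fin 3) K) : Ψ (MvPolynomial.pderiv i f) = L (Ψ f) := by
  induction f using MvPolynomial.induction_on with
  | C a => rw [MvPolynomial.pderiv_C, map_zero, psi_C, hC]
  | add p q hp hq => rw [map_add, map_add, map_add, hp, hq, hadd]
  | mul_X p j hp =>
    have hl : MvPolynomial.pderiv i (p * MvPolynomial.X j)
        = MvPolynomial.pderiv i p * MvPolynomial.X j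
          + p * MvPolynomial.pderiv i (MvPolynomial.X j) := by
      rw [Derivation.leibniz, smul_eq_mul, smul_eq_mul]
      ring
    rw [hl, map_add, map_mul, map_mul, hp, hX j, map_mul, hmul]

/-- bundled coefficientwise x₁-derivative -/
def dmapHom : K[X][X] →+ K[X][X] :=
  AddMonoidHom.mk' dmap (liftD_add _)

/-- coefficientwise x₂-derivative on `K[x₁][x₂][x₃]` -/
def d2T : K[X][X][X] → K[X][X][X] := liftD (derivative (R := K[X])).toAddMonoidHom

/-- coefficientwise x₁-derivative on `K[x₁][x₂][x₃]` -/
def d1T : K[X][X][X] → K[X][X][X] := liftD (dmapHom (K := K))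

lemma coeff_d2T (F : K[X][X][X]) (k : ℕ) : (d2T F).coeff k = derivative (F.coeff k) :=
  coeff_liftD _ F k

lemma coeff_d1T (F : K[X][X][X]) (k : ℕ) : (d1T F).coeff k = dmap (F.coeff k) :=
  coeff_liftD _ F k

lemma d2T_C (g : K[X][X]) : d2T (C g) = C (derivative g) := liftD_C _ g

lemma d2T_X : d2T (X : K[X][X][X]) = 0 := liftD_X _ derivative_one

lemma dmap_X : dmap (X : K[X][X]) = 0 := liftD_X _ derivative_one

lemma dmap_one : dmap (1 : K[X][X]) = 0 := by
  have h : (1 : K[X][X]) = C 1 := by simp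
  rw [h, dmap_C, derivative_one, map_zero]

lemma d1T_C (g : K[X][X]) : d1T (C g) = C (dmap g) := liftD_C _ g

lemma d1T_X : d1T (X : K[X][X][X]) = 0 := liftD_X _ dmap_one

lemma psi_pderiv2 (f : MvPolynomial (Fin 3) K) :
    Ψ (MvPolynomial.pderiv 2 f) = derivative (Ψ f) := by
  refine psi_pderiv 2 derivative (fun x y => derivative_add) (fun x y => derivative_mul)
    (fun a => by rw [algebraMap_T, derivative_C]) (fun j => ?_) f
  fin_cases j <;> simp

lemma psi_pderiv1 (f : MvPolynomial (Fin 3) K) :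
    Ψ (MvPolynomial.pderiv 1 f) = d2T (Ψ f) := by
  refine psi_pderiv 1 d2T (liftD_add _) (liftD_mul _ (fun a b => derivative_mul))
    (fun a => by rw [algebraMap_T, d2T_C, derivative_C, map_zero]) (fun j => ?_) f
  fin_cases j <;> simp [d2T_C, d2T_X]

lemma psi_pderiv0 (f : MvPolynomial (Fin 3) K) :
    Ψ (MvPolynomial.pderiv 0 f) = d1T (Ψ f) := by
  refine psi_pderiv 0 d1T (liftD_add _) (liftD_mul _ (fun a b => dmap_mul a b))
    (fun a => by rw [algebraMap_T, d1T_C, dmap_C, derivative_C, map_zero, map_zero])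
    (fun j => ?_) f
  fin_cases j <;> simp [d1T_C, d1T_X, dmap_C, dmap_X]

end
end S11

open MvPolynomial

/-- A `K`-subspace `M` of `R` is a Mathieu–Zhao space if for all `a, b ∈ R` such that
`a ^ m ∈ M` for all `m ≥ 1`, there exists `N` such that `b * a ^ m ∈ M` for all `m ≥ N`. -/
def IsMathieuZhao (K : Type*) {R : Type*} [Field K] [CommRing R] [Algebra K R]
    (M : Submodule K R) : Prop :=
  ∀ a b : R, (∀ m : ℕ, 1 ≤ m → a ^ m ∈ M) →
    ∃ N : ℕ, ∀ m : ℕ, N ≤ m → b * a ^ m ∈ M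

/-- A `K`-derivation `D` of `R` is simple if the only ideals `I` of `R` with `D(I) ⊆ I`
are `0` and `R`. -/
def Derivation.IsSimple {K R : Type*} [CommRing K] [CommRing R] [Algebra K R]
    (D : Derivation K R R) : Prop :=
  ∀ I : Ideal R, (∀ a ∈ I, D a ∈ I) → I = ⊥ ∨ I = ⊤

/-- For `D = ∂_{x₁} + (a₂ x₂ + b₂) ∂_{x₂} + b₃ ∂_{x₃}` with
`a₂, b₂ ∈ K[x₁]` and `b₃ = Σ_{j=0}^{v} b₃⁽ʲ⁾ x₂^j` where each `b₃⁽ʲ⁾ ∈ K[x₁]` and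
`b₃⁽ᵛ⁾ ≠ 0`: if `deg_{x₁} a₂ > deg_{x₁} b₃⁽ᵛ⁾`, then `Im D` is not a Mathieu–Zhao
space of `K[x₁, x₂, x₃]`. -/
theorem statement11 (K : Type*) [Field K] [CharZero K]
    (a2 b2 b3 : MvPolynomial (Fin 3) K)
    (ha2 : a2 ∈ supported K ({0} : Set (Fin 3)))
    (hb2 : b2 ∈ supported K ({0} : Set (Fin 3)))
    (v : ℕ) (b3c : ℕ → MvPolynomial (Fin 3) K)
    (hb3c : ∀ j : ℕ, b3c j ∈ supported K ({0} : Set (Fin 3)))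
    (hb3 : b3 = ∑ j ∈ Finset.range (v + 1), b3c j * X 1 ^ j)
    (hb3v : b3c v ≠ 0)
    (D : Derivation K (MvPolynomial (Fin 3) K) (MvPolynomial (Fin 3) K))
    (hD1 : D (X 0) = 1)
    (hD2 : D (X 1) = a2 * X 1 + b2)
    (hD3 : D (X 2) = b3)
    (hdeg : degreeOf (0 : Fin 3) (b3c v) < degreeOf (0 : Fin 3) a2) :
    ¬ IsMathieuZhao K (LinearMap.range D.toLinearMap) := by
  classical
  obtain ⟨α, hαrep⟩ := S11.exists_rep ha2
  obtain ⟨β2p, hβ2rep⟩ := S11.exists_rep hb2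
  choose β hβrep using fun j => S11.exists_rep (hb3c j)
  have hαne : α ≠ 0 := by
    rintro rfl
    rw [map_zero] at hαrep
    rw [← hαrep] at hdeg
    simp at hdeg
  have hdeg' : (β v).natDegree < α.natDegree := by
    rw [← S11.degreeOf_iota (β v), ← S11.degreeOf_iota α, hβrep, hαrep]
    exact hdeg
  have hd1 : 1 ≤ α.natDegree := by omega
  have hβvne : β v ≠ 0 := fun h => hb3v (by rw [← hβrep v, h, map_zero])
  have hDeq : D = pderiv 0 + (a2 * X 1 + b2) • pderiv 1 + b3 • pderiv 2 := by
    apply MvPolynomial.derivation_ext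
    intro i
    fin_cases i <;>
      simp [hD1, hD2, hD3, Derivation.add_apply, Derivation.smul_apply, smul_eq_mul]
  have hDf : ∀ f, D f = pderiv 0 f + (a2 * X 1 + b2) * pderiv 1 f + b3 * pderiv 2 f := by
    intro f
    rw [hDeq]
    simp [Derivation.add_apply, Derivation.smul_apply, smul_eq_mul]
  intro hMZ
  obtain ⟨N, hN⟩ := hMZ 1 (X 1 ^ (v + 1)) (fun m hm => by rw [one_pow]; exact ⟨X 0, hD1⟩)
  have hmem := hN N le_rfl
  rw [one_pow, mul_one] at hmem
  obtain ⟨f, hf⟩ := hmem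
  have hf' : D f = X 1 ^ (v + 1) := hf
  set F := S11.Ψ (K := K) f with hF
  have hΨa2 : S11.Ψ (K := K) a2 = Polynomial.C (Polynomial.C α) := by
    rw [← hαrep, S11.psi_iota]
  have hΨb2 : S11.Ψ (K := K) b2 = Polynomial.C (Polynomial.C β2p) := by
    rw [← hβ2rep, S11.psi_iota]
  have hΨb3 : S11.Ψ (K := K) b3
      = Polynomial.C (∑ j ∈ Finset.range (v + 1), Polynomial.C (β j) * Polynomial.X ^ j) := by
    rw [hb3, map_sum, map_sum]
    refine Finset.sum_congr rfl fun j hj => ?_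
    rw [map_mul, map_pow, S11.psi_X1, ← hβrep j, S11.psi_iota, map_mul, map_pow]
  have hmaster : S11.d1T F
      + Polynomial.C (Polynomial.C α * Polynomial.X + Polynomial.C β2p) * S11.d2T F
      + Polynomial.C (∑ j ∈ Finset.range (v + 1), Polynomial.C (β j) * Polynomial.X ^ j)
          * Polynomial.derivative F
      = Polynomial.C (Polynomial.X ^ (v + 1) : Polynomial (Polynomial K)) := by
    have h0 := congrArg (S11.Ψ (K := K)) hf'
    rw [hDf f, map_add, map_add, map_mul, map_mul, map_pow, S11.psi_X1] at h0
    rw [S11.psi_pderiv0, S11.psi_pderiv1, S11.psi_pderiv2] at h0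
    rw [map_add, map_mul, hΨa2, S11.psi_X1, hΨb2, hΨb3] at h0
    rw [map_add, map_mul, map_pow]
    exact h0
  have hE : ∀ k : ℕ, S11.Dp α β2p (F.coeff k)
      + (∑ j ∈ Finset.range (v + 1), Polynomial.C (β j) * Polynomial.X ^ j) *
          (F.coeff (k + 1) * ((k : Polynomial (Polynomial K)) + 1))
      = if k = 0 then Polynomial.X ^ (v + 1) else 0 := by
    intro k
    have hck := congrArg (fun p : Polynomial (Polynomial (Polynomial K)) => p.coeff k) hmaster
    simp only [Polynomial.coeff_add, Polynomial.coeff_C_mul, Polynomial.coeff_derivative,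
      Polynomial.coeff_C, S11.coeff_d1T, S11.coeff_d2T] at hck
    rw [S11.Dp]
    push_cast at hck ⊢
    convert hck using 2
  exact S11.main_core α β2p hαne hd1 v β hβvne hdeg' F hE
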